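/- arXiv:math/9905156 — 5 statements merged into one kernel-verified Lean document; each statement's English description precedes it below -/
import Mathlib

section
/- Let p be an odd prime with p ≤ 2r + 1, k an integer generating (ℤ/p²ℤ)*, and r ≥ s ≥ 1 integers. Then ν_p(∏_{i=s}^{r} (k^(2i) - 1)) = ⌊2r/(p-1)⌋ + Σ_{i=1}^{⌊2r/(p-1)⌋} ν_p(i) - ⌊2(s-1)/(p-1)⌋ - Σ_{i=1}^{⌊2(s-1)/(p-1)⌋} ν_p(i). -/
private lemma prod_padicVal_aux {p : ℕ} [Fact p.Prime] (S : Finset ℕ) (f : ℕ → ℤ)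
    (h : ∀ i ∈ S, f i ≠ 0) :
    padicValInt p (∏ i ∈ S, f i) = ∑ i ∈ S, padicValInt p (f i) := by
  classical
  induction S using Finset.cons_induction with
  | empty => simp [padicValInt.one]
  | cons a S ha ih =>
    rw [Finset.prod_cons, Finset.sum_cons,
      padicValInt.mul (h a (Finset.mem_cons_self a S))
        (Finset.prod_ne_zero_iff.mpr fun i hi => h i (Finset.mem_cons_of_mem hi)),
      ih (fun i hi => h i (Finset.mem_cons_of_mem hi))]

theorem stmt_5 (p : ℕ) (hp : p.Prime) (hodd : Odd p) (k : ℤ)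
    (hk : orderOf (k : ZMod (p ^ 2)) = p * (p - 1)) (r s : ℕ) (hs : 1 ≤ s)
    (hsr : s ≤ r) (hsmall : p ≤ 2 * r + 1) :
    (padicValInt p (∏ i ∈ Finset.Icc s r, (k ^ (2 * i) - 1)) : ℤ) =
      (2 * r / (p - 1) : ℕ) + ∑ i ∈ Finset.Icc 1 (2 * r / (p - 1)), (padicValNat p i : ℤ)
        - (2 * (s - 1) / (p - 1) : ℕ)
        - ∑ i ∈ Finset.Icc 1 (2 * (s - 1) / (p - 1)), (padicValNat p i : ℤ) := by
  haveI : Fact p.Prime := ⟨hp⟩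
  have hpint : Prime (p : ℤ) := Nat.prime_iff_prime_int.mp hp
  have hp2 : p % 2 = 1 := Nat.odd_iff.mp hodd
  have hp3 : 3 ≤ p := by have := hp.two_le; omega
  obtain ⟨d, hd⟩ : ∃ d, p - 1 = 2 * d := ⟨(p - 1) / 2, by omega⟩
  have hd0 : 0 < d := by omega
  -- order facts
  have hpow : (k : ZMod (p ^ 2)) ^ (p * (p - 1)) = 1 := by
    rw [← hk]; exact pow_orderOf_eq_one _
  have horder : ∀ n : ℕ, (k : ZMod (p ^ 2)) ^ n = 1 → p * (p - 1) ∣ n := by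
    intro n h
    rw [← hk]; exact orderOf_dvd_of_pow_eq_one h
  have hcast : ∀ z : ℤ, ((z : ZMod (p ^ 2)) = 0) ↔ (p : ℤ) ^ 2 ∣ z := by
    intro z
    rw [ZMod.intCast_zmod_eq_zero_iff_dvd, Nat.cast_pow]
  -- k ^ n ≠ 1 for n ≠ 0
  have hkne : ∀ n : ℕ, n ≠ 0 → k ^ n - 1 ≠ 0 := by
    intro n hn h
    have hk1 : k ^ n = 1 := by linarith [sub_eq_zero.mp h]
    have h2 : k.natAbs ^ n = 1 := by
      have := congrArg Int.natAbs hk1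
      rwa [Int.natAbs_pow] at this
    have h3 : k.natAbs = 1 := (pow_eq_one_iff.mp h2).resolve_right hn
    have h4 : k = 1 ∨ k = -1 := Int.natAbs_eq_iff.mp h3
    have h5 : (k : ZMod (p ^ 2)) ^ 2 = 1 := by
      rcases h4 with rfl | rfl <;> push_cast <;> ring
    have h6 := horder 2 h5
    have h7 := Nat.le_of_dvd (by norm_num) h6
    have h8 : 3 * (p - 1) ≤ p * (p - 1) := Nat.mul_le_mul_right _ hp3
    omega
  -- p does not divide k
  have hpk : ¬(p : ℤ) ∣ k := by
    intro h
    have h1 : ((k ^ (p * (p - 1)) - 1 : ℤ) : ZMod (p ^ 2)) = 0 := by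
      push_cast
      rw [hpow]; ring
    have h2 : (p : ℤ) ∣ k ^ (p * (p - 1)) - 1 :=
      dvd_trans (dvd_pow_self _ (by norm_num)) ((hcast _).mp h1)
    have h3 : (p : ℤ) ∣ k ^ (p * (p - 1)) :=
      dvd_pow h (Nat.mul_ne_zero (by omega) (by omega))
    have h4 : (p : ℤ) ∣ 1 := by
      have := dvd_sub h3 h2
      simpa using this
    have := Int.le_of_dvd one_pos h4
    omega
  have hkp0 : (k : ZMod p) ≠ 0 := by
    rw [Ne, ZMod.intCast_zmod_eq_zero_iff_dvd]; exact hpk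
  have hx : ¬(p : ℤ) ∣ k ^ (p - 1) := fun h => hpk (hpint.dvd_of_dvd_pow h)
  -- Fermat: p ∣ k^(p-1) - 1
  have hfermat : (p : ℤ) ∣ k ^ (p - 1) - 1 := by
    rw [← ZMod.intCast_zmod_eq_zero_iff_dvd]
    push_cast
    rw [ZMod.pow_card_sub_one_eq_one hkp0]
    ring
  -- but not p^2
  have hnot2 : ¬(p : ℤ) ^ 2 ∣ k ^ (p - 1) - 1 := by
    intro h
    have h0 : ((k ^ (p - 1) - 1 : ℤ) : ZMod (p ^ 2)) = 0 := (hcast _).mpr h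
    push_cast at h0
    have h1 : (k : ZMod (p ^ 2)) ^ (p - 1) = 1 := by
      have := sub_eq_zero.mp h0
      simpa using this
    have h2 := Nat.le_of_dvd (by omega) (horder _ h1)
    have h3 : 3 * (p - 1) ≤ p * (p - 1) := Nat.mul_le_mul_right _ hp3
    omega
  have hne0 : k ^ (p - 1) - 1 ≠ 0 := hkne (p - 1) (by omega)
  have hval1 : padicValInt p (k ^ (p - 1) - 1) = 1 := by
    have hge : 1 ≤ padicValInt p (k ^ (p - 1) - 1) := by
      rcases (padicValInt_dvd_iff 1 (k ^ (p - 1) - 1)).mp (by simpa using hfermat) with h | h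
      · exact absurd h hne0
      · exact h
    have hlt : padicValInt p (k ^ (p - 1) - 1) < 2 := by
      by_contra hge2
      exact hnot2 ((padicValInt_dvd_iff 2 _).mpr (Or.inr (by omega)))
    omega
  -- conversion lemma
  have hconv : ∀ z : ℤ, z ≠ 0 → emultiplicity (p : ℤ) z = (padicValInt p z : ℕ∞) := by
    intro z hz
    rw [← Int.emultiplicity_natAbs, ← padicValNat_eq_emultiplicity (Int.natAbs_ne_zero.mpr hz)]
    rfl
  -- value at multiples of d
  have hC : ∀ m : ℕ, m ≠ 0 → padicValInt p (k ^ (2 * (d * m)) - 1) = 1 + padicValNat p m := by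
    intro m hm
    have hrw : k ^ (2 * (d * m)) = (k ^ (p - 1)) ^ m := by
      rw [← pow_mul, hd]; ring_nf
    have hlte := Int.emultiplicity_pow_sub_pow hp hodd hfermat hx m
    rw [one_pow] at hlte
    have hne1 : (k ^ (p - 1)) ^ m - 1 ≠ 0 := by
      rw [← pow_mul]
      exact hkne _ (Nat.mul_ne_zero (by omega) hm)
    rw [hconv _ hne1, hconv _ hne0, hval1,
      ← padicValNat_eq_emultiplicity hm] at hlte
    rw [hrw]
    exact_mod_cast hlte
  -- vanishing off multiples of d
  have hB : ∀ i : ℕ, ¬d ∣ i → padicValInt p (k ^ (2 * i) - 1) = 0 := by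
    intro i hdi
    apply padicValInt.eq_zero_of_not_dvd
    intro hdvd
    have h2 := dvd_sub_pow_of_dvd_sub hdvd 1
    rw [pow_one, ← pow_mul, one_pow] at h2
    have h3 : (k : ZMod (p ^ 2)) ^ (2 * i * p) = 1 := by
      have h0 : ((k ^ (2 * i * p) - 1 : ℤ) : ZMod (p ^ 2)) = 0 := (hcast _).mpr h2
      push_cast at h0
      have := sub_eq_zero.mp h0
      simpa using this
    have h4 := horder _ h3
    have h5 : p - 1 ∣ 2 * i := by
      obtain ⟨c, hc⟩ := h4
      refine ⟨c, ?_⟩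
      apply Nat.eq_of_mul_eq_mul_left hp.pos
      calc p * (2 * i) = 2 * i * p := by ring
        _ = p * (p - 1) * c := hc
        _ = p * ((p - 1) * c) := by ring
    apply hdi
    obtain ⟨c, hc⟩ := h5
    rw [hd] at hc
    exact ⟨c, by rw [mul_assoc] at hc; omega⟩
  -- rewrite divisions
  have hb' : 2 * r / (p - 1) = r / d := by
    rw [hd, Nat.mul_div_mul_left _ _ (by norm_num : 0 < 2)]
  have hs' : 2 * (s - 1) / (p - 1) = (s - 1) / d := by
    rw [hd, Nat.mul_div_mul_left _ _ (by norm_num : 0 < 2)]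
  rw [hb', hs']
  set a := (s - 1) / d with ha
  set b := r / d with hbdef
  have hab : a ≤ b := Nat.div_le_div_right (by omega)
  -- membership characterization
  have hmem : ∀ c : ℕ, (a + 1 ≤ c ∧ c ≤ b) ↔ (s ≤ d * c ∧ d * c ≤ r) := by
    intro c
    rw [Nat.add_one_le_iff]
    constructor
    · rintro ⟨h1, h2⟩
      have g1 : s - 1 < c * d := (Nat.div_lt_iff_lt_mul hd0).mp h1
      have g2 : c * d ≤ r := (Nat.le_div_iff_mul_le hd0).mp h2
      rw [mul_comm] at g1 g2
      exact ⟨by omega, g2⟩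
    · rintro ⟨h1, h2⟩
      rw [mul_comm] at h1 h2
      exact ⟨(Nat.div_lt_iff_lt_mul hd0).mpr (by omega),
        (Nat.le_div_iff_mul_le hd0).mpr h2⟩
  -- split product
  have hsplit : padicValInt p (∏ i ∈ Finset.Icc s r, (k ^ (2 * i) - 1)) =
      ∑ i ∈ Finset.Icc s r, padicValInt p (k ^ (2 * i) - 1) :=
    prod_padicVal_aux _ _ (fun i hi => hkne _ (by
      have := (Finset.mem_Icc.mp hi).1; omega))
  have hfilter : ∑ i ∈ Finset.Icc s r, padicValInt p (k ^ (2 * i) - 1) =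
      ∑ i ∈ (Finset.Icc s r).filter (fun i => d ∣ i), padicValInt p (k ^ (2 * i) - 1) := by
    refine (Finset.sum_filter_of_ne ?_).symm
    intro i _ hne
    by_contra hdi
    exact hne (hB i hdi)
  have himg : (Finset.Icc s r).filter (fun i => d ∣ i) =
      (Finset.Icc (a + 1) b).image (fun m => d * m) := by
    ext n
    simp only [Finset.mem_filter, Finset.mem_Icc, Finset.mem_image]
    constructor
    · rintro ⟨⟨h1, h2⟩, c, rfl⟩
      exact ⟨c, (hmem c).mpr ⟨h1, h2⟩, rfl⟩
    · rintro ⟨m, hm, rfl⟩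
      obtain ⟨hm1, hm2⟩ := (hmem m).mp hm
      exact ⟨⟨hm1, hm2⟩, m, rfl⟩
  have hinj : ∀ x ∈ Finset.Icc (a + 1) b, ∀ y ∈ Finset.Icc (a + 1) b,
      d * x = d * y → x = y := fun x _ y _ h => Nat.eq_of_mul_eq_mul_left hd0 h
  have hLHS : padicValInt p (∏ i ∈ Finset.Icc s r, (k ^ (2 * i) - 1)) =
      ∑ m ∈ Finset.Icc (a + 1) b, (1 + padicValNat p m) := by
    rw [hsplit, hfilter, himg, Finset.sum_image hinj]
    refine Finset.sum_congr rfl (fun m hm => ?_)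
    simp only [Finset.mem_Icc] at hm
    exact hC m (Nat.one_le_iff_ne_zero.mp (le_trans (Nat.le_add_left 1 a) hm.1))
  rw [hLHS]
  -- sum difference
  have hSum : ∑ i ∈ Finset.Icc 1 b, (padicValNat p i : ℤ) -
      ∑ i ∈ Finset.Icc 1 a, (padicValNat p i : ℤ) =
      ∑ i ∈ Finset.Icc (a + 1) b, (padicValNat p i : ℤ) := by
    have h := Finset.sum_Ioc_consecutive (fun i => (padicValNat p i : ℤ))
      (Nat.zero_le a) hab
    rw [← Finset.Icc_add_one_left_eq_Ioc, ← Finset.Icc_add_one_left_eq_Ioc, ← Finset.Icc_add_one_left_eq_Ioc] at h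
    simp only [Nat.succ_eq_add_one, Nat.zero_add] at h
    linarith
  push_cast at hSum ⊢
  rw [Finset.sum_add_distrib, Finset.sum_const, nsmul_eq_mul, mul_one, Nat.card_Icc]
  have hcard : ((b + 1 - (a + 1) : ℕ) : ℤ) = (b : ℤ) - a := by omega
  rw [hcard, ← hSum]
  ring
end

section
/- For positive integers i and r with i < r, if ν₂(2i) ≥ r - i - 1, then ν₂(C(2i, r-i)) = ν₂(2i) - ν₂(r-i), where C(n,k) denotes the binomial coefficient. -/
lemma aux_key (n k j : ℕ) (hk : 1 ≤ k) (hkn : k ≤ n) (h2 : 2 ∣ n)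
    (hval : k - 1 ≤ padicValNat 2 n) (hj : 1 ≤ j) :
    (k - 1) % 2 ^ j + (n - k) % 2 ^ j < 2 ^ j := by
  have hn0 : n ≠ 0 := by omega
  have hvd : 2 ^ padicValNat 2 n ∣ n := pow_padicValNat_dvd
  have hnd : ¬ 2 ^ (padicValNat 2 n + 1) ∣ n := pow_succ_padicValNat_not_dvd hn0
  generalize hV : padicValNat 2 n = v at hval hvd hnd
  have hx : 0 < 2 ^ j := Nat.pow_pos (by norm_num)
  have ha : (k - 1) % 2 ^ j < 2 ^ j := Nat.mod_lt _ hx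
  have hb : (n - k) % 2 ^ j < 2 ^ j := Nat.mod_lt _ hx
  have hsum : ((k - 1) % 2 ^ j + (n - k) % 2 ^ j) % 2 ^ j = (n - 1) % 2 ^ j := by
    rw [← Nat.add_mod]; congr 1; omega
  have hsub : 2 ^ j ≤ (k - 1) % 2 ^ j + (n - k) % 2 ^ j →
      ((k - 1) % 2 ^ j + (n - k) % 2 ^ j) % 2 ^ j
        = (k - 1) % 2 ^ j + (n - k) % 2 ^ j - 2 ^ j := fun h => by
    rw [Nat.mod_eq_sub_mod h, Nat.mod_eq_of_lt (by omega)]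
  rcases le_or_gt j v with hjv | hjv
  · -- j ≤ v : 2^j ∣ n, so (n-1) % 2^j = 2^j - 1
    have hjd : 2 ^ j ∣ n := (pow_dvd_pow 2 hjv).trans hvd
    have hnm : n % 2 ^ j = 0 := by
      obtain ⟨c, rfl⟩ := hjd; exact Nat.mul_mod_right _ _
    have hq : 1 ≤ n / 2 ^ j := Nat.one_le_div_iff hx |>.mpr (Nat.le_of_dvd (by omega) hjd)
    obtain ⟨t, ht⟩ := Nat.exists_eq_add_of_le hq
    have hmul : n = 2 ^ j * (n / 2 ^ j) := by
      have := Nat.div_add_mod n (2 ^ j); omega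
    rw [ht, Nat.mul_add, Nat.mul_one] at hmul
    have e : n - 1 = 2 ^ j * t + (2 ^ j - 1) := by omega
    have hd : (n - 1) % 2 ^ j = 2 ^ j - 1 := by
      rw [e, Nat.mul_add_mod, Nat.mod_eq_of_lt (by omega)]
    omega
  · -- v < j
    have hnm0 : n % 2 ^ j ≠ 0 := fun h =>
      hnd ((pow_dvd_pow 2 (by omega)).trans (Nat.dvd_of_mod_eq_zero h))
    have hvmod : n % 2 ^ j % 2 ^ v = 0 := by
      rw [Nat.mod_mod_of_dvd _ (pow_dvd_pow 2 (le_of_lt hjv))]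
      obtain ⟨c, rfl⟩ := hvd; exact Nat.mul_mod_right _ _
    have hge : 2 ^ v ≤ n % 2 ^ j :=
      Nat.le_of_dvd (by omega) (Nat.dvd_of_mod_eq_zero hvmod)
    have e : n - 1 = 2 ^ j * (n / 2 ^ j) + (n % 2 ^ j - 1) := by
      have := Nat.div_add_mod n (2 ^ j); omega
    have hd : (n - 1) % 2 ^ j = n % 2 ^ j - 1 := by
      have hlt : n % 2 ^ j < 2 ^ j := Nat.mod_lt _ hx
      rw [e, Nat.mul_add_mod, Nat.mod_eq_of_lt (by omega)]
    have hmlt : k - 1 < 2 ^ j := by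
      calc k - 1 ≤ v := hval
        _ < 2 ^ v := Nat.lt_two_pow_self (n := v)
        _ ≤ 2 ^ j := Nat.pow_le_pow_right (by norm_num) (le_of_lt hjv)
    have hma : (k - 1) % 2 ^ j = k - 1 := Nat.mod_eq_of_lt hmlt
    have hvlt : v < 2 ^ v := Nat.lt_two_pow_self (n := v)
    omega

lemma aux_odd (n k : ℕ) (hk : 1 ≤ k) (hkn : k ≤ n) (h2 : 2 ∣ n)
    (hval : k - 1 ≤ padicValNat 2 n) :
    padicValNat 2 ((n - 1).choose (k - 1)) = 0 := by
  haveI : Fact (Nat.Prime 2) := ⟨Nat.prime_two⟩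
  rw [padicValNat_choose (p := 2) (by omega) (Nat.lt_succ_self _)]
  rw [Finset.card_eq_zero, Finset.filter_eq_empty_iff]
  intro j hj
  simp only [Finset.mem_Ico] at hj
  have := aux_key n k j hk hkn h2 hval hj.1
  have : n - 1 - (k - 1) = n - k := by omega
  simp only [this, not_le]
  exact aux_key n k j hk hkn h2 hval hj.1

theorem stmt_10 (i r : ℕ) (hi : 0 < i) (hir : i < r) (hle : r - i ≤ 2 * i)
    (hval : r - i - 1 ≤ padicValNat 2 (2 * i)) :
    (padicValNat 2 ((2 * i).choose (r - i)) : ℤ) =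
      (padicValNat 2 (2 * i) : ℤ) - (padicValNat 2 (r - i) : ℤ) := by
  haveI : Fact (Nat.Prime 2) := ⟨Nat.prime_two⟩
  set n := 2 * i with hn
  set k := r - i with hkdef
  have hk : 1 ≤ k := by omega
  have hkn : k ≤ n := hle
  have h2 : 2 ∣ n := ⟨i, rfl⟩
  have hid : n * (n - 1).choose (k - 1) = n.choose k * k := by
    have := Nat.add_one_mul_choose_eq (n - 1) (k - 1)
    have h1 : n - 1 + 1 = n := by omega
    have h2 : k - 1 + 1 = k := by omega
    rwa [h1, h2] at this
  have hC : n.choose k ≠ 0 := Nat.choose_pos hkn |>.ne'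
  have hC' : (n - 1).choose (k - 1) ≠ 0 := Nat.choose_pos (by omega) |>.ne'
  have hval2 : padicValNat 2 (n * (n - 1).choose (k - 1))
      = padicValNat 2 (n.choose k * k) := by rw [hid]
  rw [padicValNat.mul (by omega) hC', padicValNat.mul hC (by omega),
    aux_odd n k hk hkn h2 hval] at hval2
  omega
end

section
/- For positive integers i and r with max(⌊(r-1)/3⌋ + 1) ≤ i < r - 1 and r - i ≤ 2i, we have ν₂(C(2i, r-i)) + 2(r - i - 1) > ν₂(2i). -/
theorem stmt_11 (i r : ℕ) (hi : 0 < i) (hlow : (r - 1) / 3 + 1 ≤ i)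
    (hhigh : i < r - 1) (hle : r - i ≤ 2 * i) :
    padicValNat 2 ((2 * i).choose (r - i)) + 2 * (r - i - 1) > padicValNat 2 (2 * i) := by
  set k := r - i with hk
  have hk2 : 2 ≤ k := by omega
  -- key identity: 2i * C(2i-1, k-1) = C(2i, k) * k
  have hident : (2 * i) * (2 * i - 1).choose (k - 1) = (2 * i).choose k * k := by
    have := Nat.add_one_mul_choose_eq (2 * i - 1) (k - 1)
    have h1 : 2 * i - 1 + 1 = 2 * i := by omega
    have h2 : k - 1 + 1 = k := by omega
    rwa [h1, h2] at this
  have h2i : 2 * i ≠ 0 := by omega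
  have hkne : k ≠ 0 := by omega
  have hC : (2 * i).choose k ≠ 0 := Nat.choose_pos hle |>.ne'
  have hC' : (2 * i - 1).choose (k - 1) ≠ 0 :=
    Nat.choose_pos (by omega) |>.ne'
  have hval : padicValNat 2 (2 * i) + padicValNat 2 ((2 * i - 1).choose (k - 1)) =
      padicValNat 2 ((2 * i).choose k) + padicValNat 2 k := by
    rw [← padicValNat.mul h2i hC', ← padicValNat.mul hC hkne, hident]
  have hkey : padicValNat 2 (2 * i) ≤ padicValNat 2 ((2 * i).choose k) + padicValNat 2 k := by
    omega
  have hlog : padicValNat 2 k ≤ Nat.log 2 k := padicValNat_le_nat_log k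
  have hlt : Nat.log 2 k < k := Nat.log_lt_self 2 hkne
  omega
end

section
/- Define integers M_r for r ≥ n recursively by M_n = 1 and, for r > n, M_r = Σ_{i = max(⌊(r-1)/3⌋+1, n)}^{r-1} 3^(3i-r) · C(2i, r-i) · ∏_{j=i+1}^{r-1}(1 - 3^(2j)) · M_i. Then for all r ≥ n, ν₂(M_r) = (r - n) + Σ_{s=n}^{r-1} ν₂(s). -/
private lemma odd_part (m : ℕ) (hm : 0 < m) :
    ∃ w : ℕ, Odd w ∧ m = 2 ^ (padicValNat 2 m) * w := by
  refine ⟨ordCompl[2] m, ?_, ?_⟩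
  · rw [← Nat.not_even_iff_odd, even_iff_two_dvd]
    exact Nat.not_dvd_ordCompl Nat.prime_two hm.ne'
  · rw [← Nat.factorization_def m Nat.prime_two]
    exact (Nat.ordProj_mul_ordCompl_eq_self m 2).symm

private lemma nine_two_pow (t : ℕ) : ∃ w : ℤ, Odd w ∧ (9:ℤ)^(2^t) - 1 = 2^(3+t) * w := by
  induction t with
  | zero => exact ⟨1, odd_one, by norm_num⟩
  | succ t ih =>
    obtain ⟨w, hw, h⟩ := ih
    refine ⟨w * (2^(2+t) * w + 1), hw.mul (Even.add_one ⟨2^(1+t)*w, by ring⟩), ?_⟩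
    have h9 : (9:ℤ)^(2^(t+1)) - 1 = ((9:ℤ)^(2^t) - 1) * ((9:ℤ)^(2^t) + 1) := by
      rw [pow_succ, pow_mul]; ring
    have h2 : (9:ℤ)^(2^t) + 1 = 2 * (2^(2+t) * w + 1) := by
      have h3 : (9:ℤ)^(2^t) = 2^(3+t) * w + 1 := by linarith
      rw [h3]; ring
    rw [h9, h, h2]; ring

private lemma odd_geom_sum (x : ℤ) (hx : Odd x) (m : ℕ) (hm : Odd m) :
    Odd (∑ i ∈ Finset.range m, x ^ i) := by
  rw [Int.odd_iff, Finset.sum_int_mod,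
    Finset.sum_congr rfl (fun i _ => Int.odd_iff.mp (hx.pow))]
  simp only [Finset.sum_const, Finset.card_range, nsmul_eq_mul, mul_one]
  exact Int.odd_iff.mp (Int.odd_coe_nat m |>.mpr hm)

private lemma factor_odd_part (j : ℕ) (hj : 1 ≤ j) :
    ∃ w : ℤ, Odd w ∧ 1 - (3:ℤ)^(2*j) = 2^(3 + padicValNat 2 j) * w := by
  obtain ⟨m, hm, hjm⟩ := odd_part j hj
  obtain ⟨w, hw, h9⟩ := nine_two_pow (padicValNat 2 j)
  have hS := odd_geom_sum ((9:ℤ)^(2^(padicValNat 2 j))) (Odd.pow (⟨4, by norm_num⟩ : Odd (9:ℤ))) m hm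
  refine ⟨-(w * ∑ i ∈ Finset.range m, ((9:ℤ)^(2^(padicValNat 2 j)))^i), (hw.mul hS).neg, ?_⟩
  have hx : (3:ℤ)^(2*j) = ((9:ℤ)^(2^(padicValNat 2 j)))^m := by
    rw [← pow_mul, two_mul, ← hjm]
    rw [show 3^(j+j) = (3^2:ℤ)^j by rw [← pow_mul]; ring_nf]
    norm_num
  have hg := geom_sum_mul ((9:ℤ)^(2^(padicValNat 2 j))) m
  rw [hx]
  calc 1 - ((9:ℤ)^(2^(padicValNat 2 j)))^m
      = -((∑ i ∈ Finset.range m, ((9:ℤ)^(2^(padicValNat 2 j)))^i) * ((9:ℤ)^(2^(padicValNat 2 j)) - 1)) := by rw [hg]; ring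
    _ = 2 ^ (3 + padicValNat 2 j) * -(w * ∑ i ∈ Finset.range m, ((9:ℤ)^(2^(padicValNat 2 j)))^i) := by rw [h9]; ring


private lemma prod_odd_part (s : Finset ℕ) (f : ℕ → ℤ) (g : ℕ → ℕ)
    (h : ∀ j ∈ s, ∃ w : ℤ, Odd w ∧ f j = 2 ^ g j * w) :
    ∃ w : ℤ, Odd w ∧ ∏ j ∈ s, f j = 2 ^ (∑ j ∈ s, g j) * w := by
  classical
  induction s using Finset.induction_on with
  | empty => exact ⟨1, odd_one, by simp⟩
  | @insert x s hx ih =>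
    obtain ⟨w, hw, hfw⟩ := h _ (Finset.mem_insert_self _ _)
    obtain ⟨v, hv, hpv⟩ := ih (fun j hj => h j (Finset.mem_insert_of_mem hj))
    refine ⟨w * v, hw.mul hv, ?_⟩
    rw [Finset.prod_insert hx, Finset.sum_insert hx, hfw, hpv]
    rw [pow_add]; ring

private lemma choose_val_bound (i k : ℕ) (hi : 1 ≤ i) (hk : 2 ≤ k) (hki : k ≤ 2*i) :
    padicValNat 2 i + 4 ≤ padicValNat 2 ((2*i).choose k) + 2*k := by
  haveI : Fact (Nat.Prime 2) := ⟨Nat.prime_two⟩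
  have key : (2*i) * ((2*i-1).choose (k-1)) = ((2*i).choose k) * k := by
    have h := Nat.add_one_mul_choose_eq (2*i-1) (k-1)
    try simp only [Nat.succ_eq_add_one] at h
    rw [show 2*i-1+1 = 2*i by omega, show k-1+1 = k by omega] at h
    exact h
  have hC : (2*i).choose k ≠ 0 := (Nat.choose_pos hki).ne'
  have hC' : (2*i-1).choose (k-1) ≠ 0 := (Nat.choose_pos (by omega)).ne'
  have hv := congrArg (padicValNat 2) key
  rw [padicValNat.mul (by omega) hC', padicValNat.mul hC (by omega)] at hv
  have h2iv : padicValNat 2 (2*i) = 1 + padicValNat 2 i := by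
    rw [padicValNat.mul two_ne_zero (by omega), padicValNat.self (by norm_num)]
  have hkb : padicValNat 2 k < k :=
    Nat.lt_of_pow_dvd_right (by omega) (by norm_num) (pow_padicValNat_dvd (p:=2) (n:=k))
  omega

private lemma sum_split (f : ℕ → ℕ) (n i r : ℕ) (hn : 1 ≤ n) (hni : n ≤ i) (hir : i ≤ r) :
    ∑ s ∈ Finset.Icc n r, f s
      = (∑ s ∈ Finset.Icc n (i-1), f s) + f i + ∑ s ∈ Finset.Icc (i+1) r, f s := by
  have h1 : Finset.Icc n r = Finset.Ioc (n-1) r := by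
    rw [← Finset.Icc_add_one_left_eq_Ioc]; congr 1; omega
  have h2 : Finset.Icc n (i-1) = Finset.Ioc (n-1) (i-1) := by
    rw [← Finset.Icc_add_one_left_eq_Ioc]; congr 1; omega
  have h3 : Finset.Icc (i+1) r = Finset.Ioc i r := Finset.Icc_add_one_left_eq_Ioc ..
  rw [h1, h2, h3,
    ← Finset.sum_Ioc_consecutive f (show n-1 ≤ i by omega) (show i ≤ r by omega),
    ← Finset.sum_Ioc_consecutive f (show n-1 ≤ i-1 by omega) (show i-1 ≤ i by omega),
    show Finset.Ioc (i-1) i = {i} by ext x; simp [Finset.mem_Ioc]; omega,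
    Finset.sum_singleton]

theorem stmt_12 (n : ℕ) (hn : 1 ≤ n) (M : ℕ → ℤ) (hMn : M n = 1)
    (hrec : ∀ r : ℕ, n < r →
      M r = ∑ i ∈ Finset.Icc (max ((r - 1) / 3 + 1) n) (r - 1),
        (3 : ℤ) ^ (3 * i - r) * ((2 * i).choose (r - i) : ℤ) *
          (∏ j ∈ Finset.Icc (i + 1) (r - 1), (1 - (3 : ℤ) ^ (2 * j))) * M i) :
    ∀ r : ℕ, n ≤ r →
      padicValInt 2 (M r) = (r - n) + ∑ s ∈ Finset.Icc n (r - 1), padicValNat 2 s := by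
  haveI : Fact (Nat.Prime 2) := ⟨Nat.prime_two⟩
  have key : ∀ r : ℕ, n ≤ r → ∃ u : ℤ, Odd u ∧
      M r = 2 ^ ((r - n) + ∑ s ∈ Finset.Icc n (r - 1), padicValNat 2 s) * u := by
    intro r
    induction r using Nat.strong_induction_on with
    | _ r ih =>
    intro hnr
    rcases eq_or_lt_of_le hnr with heq | hlt
    · refine ⟨1, odd_one, ?_⟩
      rw [← heq, hMn, Finset.Icc_eq_empty (by omega : ¬ n ≤ n - 1)]
      simp
    · obtain ⟨r', rfl⟩ : ∃ r', r = r' + 2 := ⟨r - 2, by omega⟩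
      rw [show r' + 2 - 1 = r' + 1 from rfl]
      set V := r' + 2 - n + ∑ s ∈ Finset.Icc n (r'+1), padicValNat 2 s with hV
      -- IH at r'+1
      obtain ⟨u, hu, hMu⟩ := ih (r'+1) (by omega) (by omega)
      rw [show r' + 1 - 1 = r' from rfl] at hMu
      obtain ⟨w, hw, hww⟩ := odd_part (r'+1) (by omega)
      have hVsum : ∑ s ∈ Finset.Icc n (r'+1), padicValNat 2 s
          = (∑ s ∈ Finset.Icc n r', padicValNat 2 s) + padicValNat 2 (r'+1) :=
        Finset.sum_Icc_succ_top (by omega) _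
      have hlo1 : max ((r'+1)/3 + 1) n ≤ r' + 1 := by omega
      -- top term
      have hcast : (((2*(r'+1)).choose ((r'+2)-(r'+1)) : ℕ) : ℤ)
          = 2^(1 + padicValNat 2 (r'+1)) * (w:ℤ) := by
        rw [show (r'+2)-(r'+1) = 1 by omega, Nat.choose_one_right]
        conv_lhs => rw [hww]
        push_cast
        rw [pow_add]
        ring
      have htop : (3:ℤ)^(3*(r'+1)-(r'+2)) * (((2*(r'+1)).choose ((r'+2)-(r'+1)) : ℕ) : ℤ) *
          (∏ j ∈ Finset.Icc ((r'+1)+1) (r'+1), (1 - (3:ℤ)^(2*j))) * M (r'+1)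
          = 2 ^ V * ((3:ℤ)^(3*(r'+1)-(r'+2)) * (w:ℤ) * u) := by
        rw [show Finset.Icc ((r'+1)+1) (r'+1) = ∅ from Finset.Icc_eq_empty (by omega),
          Finset.prod_empty, hMu, hcast,
          show V = 1 + padicValNat 2 (r'+1) + (r' + 1 - n + ∑ s ∈ Finset.Icc n r', padicValNat 2 s) by omega]
        rw [pow_add, pow_add]
        ring
      -- rest divisible by 2^(V+1)
      have hrest : (2:ℤ) ^ (V+1) ∣ ∑ i ∈ Finset.Icc (max ((r'+1)/3 + 1) n) r',
          (3:ℤ)^(3*i-(r'+2)) * (((2*i).choose ((r'+2)-i) : ℕ) : ℤ) *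
          (∏ j ∈ Finset.Icc (i+1) (r'+1), (1 - (3:ℤ)^(2*j))) * M i := by
        apply Finset.dvd_sum
        intro i hi
        rw [Finset.mem_Icc] at hi
        have hin : n ≤ i := le_trans (le_max_right _ _) hi.1
        have hi3 : (r'+1)/3 + 1 ≤ i := le_trans (le_max_left _ _) hi.1
        have h3i : r' + 2 ≤ 3 * i := by omega
        have hk2 : 2 ≤ (r'+2) - i := by omega
        have hk2i : (r'+2) - i ≤ 2*i := by omega
        obtain ⟨ui, hui, hMui⟩ := ih i (by omega) hin
        obtain ⟨wp, hwp, hprod⟩ := prod_odd_part (Finset.Icc (i+1) (r'+1)) _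
          (fun j => 3 + padicValNat 2 j)
          (fun j hj => factor_odd_part j (by rw [Finset.mem_Icc] at hj; omega))
        have hcb := choose_val_bound i ((r'+2)-i) (by omega) hk2 hk2i
        have hsplit := sum_split (padicValNat 2) n i (r'+1) hn hin (by omega)
        have hP : ∑ j ∈ Finset.Icc (i+1) (r'+1), (3 + padicValNat 2 j)
            = 3*(r'+1-i) + ∑ j ∈ Finset.Icc (i+1) (r'+1), padicValNat 2 j := by
          rw [Finset.sum_add_distrib, Finset.sum_const, Nat.card_Icc, smul_eq_mul]
          omega
        obtain ⟨c, hc⟩ : (2:ℤ) ^ (padicValNat 2 ((2*i).choose ((r'+2)-i))) ∣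
            (((2*i).choose ((r'+2)-i) : ℕ) : ℤ) := by
          exact_mod_cast Int.natCast_dvd_natCast.mpr
            (pow_padicValNat_dvd (p := 2) (n := (2*i).choose ((r'+2)-i)))
        have hineq : V + 1 ≤ padicValNat 2 ((2*i).choose ((r'+2)-i))
            + (∑ j ∈ Finset.Icc (i+1) (r'+1), (3 + padicValNat 2 j))
            + (i - n + ∑ s ∈ Finset.Icc n (i-1), padicValNat 2 s) := by omega
        refine dvd_trans (pow_dvd_pow 2 hineq) ?_
        rw [hprod, hMui, hc]
        exact ⟨(3:ℤ)^(3*i-(r'+2)) * c * wp * ui, by rw [pow_add, pow_add]; ring⟩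
      obtain ⟨c, hc⟩ := hrest
      refine ⟨(3:ℤ)^(3*(r'+1)-(r'+2)) * (w:ℤ) * u + 2 * c,
        Odd.add_even (((Odd.pow (⟨1, by norm_num⟩ : Odd (3:ℤ))).mul
          ((Int.odd_coe_nat w).mpr hw)).mul hu) ⟨c, two_mul c⟩, ?_⟩
      rw [hrec _ hlt, show r'+2-1 = r'+1 from rfl, Finset.sum_Icc_succ_top hlo1, htop, hc]
      rw [pow_succ]
      ring
  intro r hr
  obtain ⟨u, hu, hMr⟩ := key r hr
  have hu0 : u.natAbs ≠ 0 := by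
    rcases hu with ⟨t, ht⟩
    simp only [Int.natAbs_ne_zero]
    omega
  have habs : (M r).natAbs = 2 ^ ((r - n) + ∑ s ∈ Finset.Icc n (r - 1), padicValNat 2 s) * u.natAbs := by
    rw [hMr, Int.natAbs_mul, Int.natAbs_pow]
    rfl
  rw [show padicValInt 2 (M r) = padicValNat 2 (M r).natAbs from rfl, habs,
    padicValNat.mul (by positivity) hu0, padicValNat.prime_pow,
    padicValNat.eq_zero_of_not_dvd, add_zero]
  rw [Nat.two_dvd_ne_zero, Nat.odd_iff.mp (Int.natAbs_odd.mpr hu)]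
end

section
/- Let p be an odd prime, k an integer generating (ℤ/p²ℤ)*, and r ≥ s ≥ 1 integers. Then Σ_{i=s}^{r} ν_p(k^(2i) - 1) = Σ_{i=⌊2(s-1)/(p-1)⌋+1}^{⌊2r/(p-1)⌋} (1 + ν_p(i)). -/
private lemma padicValInt_eq_emultiplicity' (p : ℕ) [Fact p.Prime] {z : ℤ} (hz : z ≠ 0) :
    (padicValInt p z : ℕ∞) = emultiplicity (p : ℤ) z := by
  rw [padicValInt, padicValNat_eq_emultiplicity (Int.natAbs_ne_zero.mpr hz),
    Int.emultiplicity_natAbs]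

theorem stmt_19 (p : ℕ) (hp : p.Prime) (hodd : Odd p) (k : ℤ)
    (hk : orderOf (k : ZMod (p ^ 2)) = p * (p - 1)) (r s : ℕ) (hs : 1 ≤ s)
    (hsr : s ≤ r) :
    ∑ i ∈ Finset.Icc s r, padicValInt p (k ^ (2 * i) - 1) =
      ∑ i ∈ Finset.Icc (2 * (s - 1) / (p - 1) + 1) (2 * r / (p - 1)),
        (1 + padicValNat p i) := by
  haveI : Fact p.Prime := ⟨hp⟩
  have hp3 : 3 ≤ p := by
    obtain ⟨t, ht⟩ := hodd
    have := hp.two_le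
    omega
  haveI : Fact (1 < p ^ 2) := ⟨by nlinarith⟩
  obtain ⟨m, hm⟩ : ∃ m, p - 1 = 2 * m := (Nat.Odd.sub_odd hodd odd_one).exists_two_nsmul _
  have hm0 : 0 < m := by omega
  have hpInt : Prime (p : ℤ) := Nat.prime_iff_prime_int.mp hp
  -- p does not divide k
  have hone : (k : ZMod (p ^ 2)) ^ (p * (p - 1)) = 1 := hk ▸ pow_orderOf_eq_one _
  have hpk : ¬ (p : ℤ) ∣ k := by
    intro h
    have h2 : ((p : ℤ)) ^ 2 ∣ k ^ 2 := pow_dvd_pow_of_dvd h 2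
    have hcast : ((k : ZMod (p ^ 2))) ^ 2 = 0 := by
      have : ((k ^ 2 : ℤ) : ZMod (p ^ 2)) = 0 :=
        (ZMod.intCast_zmod_eq_zero_iff_dvd _ _).mpr (by exact_mod_cast h2)
      push_cast at this
      exact this
    have hge : 2 ≤ p * (p - 1) := by nlinarith
    have : (k : ZMod (p ^ 2)) ^ (p * (p - 1)) = 0 := by
      rw [show p * (p - 1) = 2 + (p * (p - 1) - 2) by omega, pow_add, hcast, zero_mul]
    rw [hone] at this
    exact one_ne_zero this
  -- Fermat's little theorem
  have hkp0 : (k : ZMod p) ≠ 0 := fun h => hpk ((ZMod.intCast_zmod_eq_zero_iff_dvd _ _).mp h)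
  have hferm : (k : ZMod p) ^ (p - 1) = 1 := ZMod.pow_card_sub_one_eq_one hkp0
  have hdvd : (p : ℤ) ∣ k ^ (p - 1) - 1 := by
    have : ((k ^ (p - 1) - 1 : ℤ) : ZMod p) = 0 := by push_cast [hferm]; ring
    exact (ZMod.intCast_zmod_eq_zero_iff_dvd _ _).mp this
  -- cast helper for p^2
  have hsq : ∀ z : ℤ, (p : ℤ) ^ 2 ∣ z → ((z : ZMod (p ^ 2)) = 0) := by
    intro z hz
    exact (ZMod.intCast_zmod_eq_zero_iff_dvd _ _).mpr (by exact_mod_cast hz)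
  have hnd2 : ¬ (p : ℤ) ^ 2 ∣ k ^ (p - 1) - 1 := by
    intro h
    have : ((k : ZMod (p ^ 2))) ^ (p - 1) = 1 := by
      have := hsq _ h
      push_cast at this
      linear_combination this
    have hdvd' : p * (p - 1) ∣ p - 1 := hk ▸ orderOf_dvd_of_pow_eq_one this
    have := Nat.le_of_dvd (by omega) hdvd'
    nlinarith
  -- padicValInt of k^(p-1) - 1 is 1
  have hz1 : k ^ (p - 1) - 1 ≠ 0 := fun h => hnd2 (h ▸ dvd_zero _)
  have hval1 : padicValInt p (k ^ (p - 1) - 1) = 1 := by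
    have h1 : 1 ≤ padicValInt p (k ^ (p - 1) - 1) := by
      have := (padicValInt_dvd_iff (p := p) 1 (k ^ (p - 1) - 1)).mp (by simpa using hdvd)
      tauto
    have h2 : ¬ 2 ≤ padicValInt p (k ^ (p - 1) - 1) := by
      intro h
      exact hnd2 ((padicValInt_dvd_iff (p := p) 2 (k ^ (p - 1) - 1)).mpr (Or.inr h))
    omega
  -- order of k mod p is p - 1
  have hord : orderOf (k : ZMod p) = p - 1 := by
    set d := orderOf (k : ZMod p) with hd
    have hd1 : d ∣ p - 1 := orderOf_dvd_of_pow_eq_one hferm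
    have hkd : (p : ℤ) ∣ k ^ d - 1 := by
      have : ((k ^ d - 1 : ℤ) : ZMod p) = 0 := by
        push_cast; rw [hd, pow_orderOf_eq_one, sub_self]
      exact (ZMod.intCast_zmod_eq_zero_iff_dvd _ _).mp this
    have hlte : (p : ℤ) ^ 2 ∣ k ^ (d * p) - 1 := by
      have := dvd_sub_pow_of_dvd_sub (R := ℤ) (p := p) (a := k ^ d) (b := 1)
        (by exact_mod_cast hkd) 1
      simpa [← pow_mul] using this
    have : ((k : ZMod (p ^ 2))) ^ (d * p) = 1 := by
      have := hsq _ hlte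
      push_cast at this
      linear_combination this
    have hdvd' : p * (p - 1) ∣ d * p := hk ▸ orderOf_dvd_of_pow_eq_one this
    rw [mul_comm d p] at hdvd'
    have : (p - 1) ∣ d := (mul_dvd_mul_iff_left (by omega : p ≠ 0)).mp hdvd'
    exact Nat.dvd_antisymm hd1 this
  -- k^n ≠ 1 for n > 0
  have hkne : ∀ n : ℕ, 0 < n → k ^ n - 1 ≠ 0 := by
    intro n hn h
    have hu : IsUnit k := IsUnit.of_mul_eq_one (k ^ (n - 1)) (by
      rw [← pow_succ']
      rw [show n - 1 + 1 = n by omega]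
      linarith [h])
    rcases Int.isUnit_iff.mp hu with rfl | rfl
    · rw [show ((1 : ℤ) : ZMod (p ^ 2)) = 1 from by push_cast; rfl, orderOf_one] at hk
      have h2 : 2 ≤ p - 1 := by omega
      nlinarith [hk]
    · have : ((-1 : ℤ) : ZMod (p ^ 2)) ^ 2 = 1 := by push_cast; ring
      have hdvd' : p * (p - 1) ∣ 2 := hk ▸ orderOf_dvd_of_pow_eq_one this
      have := Nat.le_of_dvd (by omega) hdvd'
      nlinarith
  -- key per-term formula
  have key : ∀ i ∈ Finset.Icc s r,
      padicValInt p (k ^ (2 * i) - 1) =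
        if m ∣ i then 1 + padicValNat p (i / m) else 0 := by
    intro i hi
    rw [Finset.mem_Icc] at hi
    have hi1 : 1 ≤ i := le_trans hs hi.1
    by_cases hmi : m ∣ i
    · obtain ⟨j, rfl⟩ := hmi
      have hj1 : 1 ≤ j := Nat.pos_of_ne_zero (by rintro rfl; simp at hi1)
      rw [if_pos ⟨j, rfl⟩, Nat.mul_div_cancel_left _ hm0]
      have hne : k ^ (2 * (m * j)) - 1 ≠ 0 := hkne _ (by positivity)
      have hx : ¬ (p : ℤ) ∣ k ^ (p - 1) := fun h => hpk (hpInt.dvd_of_dvd_pow h)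
      have hlte := Int.emultiplicity_pow_sub_pow hp hodd
        (x := k ^ (p - 1)) (y := 1) (by simpa using hdvd) hx j
      rw [one_pow, ← pow_mul] at hlte
      have hexp : (p - 1) * j = 2 * (m * j) := by rw [hm]; ring
      rw [hexp] at hlte
      have hc1 : (padicValInt p (k ^ (2 * (m * j)) - 1) : ℕ∞) =
          emultiplicity (p : ℤ) (k ^ (2 * (m * j)) - 1) :=
        padicValInt_eq_emultiplicity' p hne
      have hc2 : (padicValInt p (k ^ (p - 1) - 1) : ℕ∞) =
          emultiplicity (p : ℤ) (k ^ (p - 1) - 1) :=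
        padicValInt_eq_emultiplicity' p hz1
      have hc3 : (padicValNat p j : ℕ∞) = emultiplicity p j :=
        padicValNat_eq_emultiplicity (by omega)
      have : (padicValInt p (k ^ (2 * (m * j)) - 1) : ℕ∞) =
          ((1 + padicValNat p j : ℕ) : ℕ∞) := by
        rw [hc1, hlte, ← hc2, ← hc3, hval1]
        push_cast
        rfl
      exact_mod_cast this
    · rw [if_neg hmi]
      apply padicValInt.eq_zero_of_not_dvd
      intro h
      have : ((k ^ (2 * i) - 1 : ℤ) : ZMod p) = 0 :=
        (ZMod.intCast_zmod_eq_zero_iff_dvd _ _).mpr h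
      push_cast at this
      have h1 : (k : ZMod p) ^ (2 * i) = 1 := by linear_combination this
      have h2 : (p - 1) ∣ 2 * i := hord ▸ orderOf_dvd_of_pow_eq_one h1
      rw [hm] at h2
      exact hmi ((mul_dvd_mul_iff_left (two_ne_zero)).mp h2)
  rw [Finset.sum_congr rfl key, ← Finset.sum_filter]
  -- reindex
  have hdivs : 2 * (s - 1) / (p - 1) = (s - 1) / m := by
    rw [hm, Nat.mul_div_mul_left _ _ two_pos]
  have hdivr : 2 * r / (p - 1) = r / m := by
    rw [hm, Nat.mul_div_mul_left _ _ two_pos]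
  rw [hdivs, hdivr]
  have hlow : ∀ j, (s - 1) / m + 1 ≤ j ↔ s ≤ m * j := by
    intro j
    rw [Nat.add_one_le_iff, Nat.div_lt_iff_lt_mul hm0, mul_comm]
    omega
  have hhigh : ∀ j, j ≤ r / m ↔ m * j ≤ r := by
    intro j
    rw [Nat.le_div_iff_mul_le hm0, mul_comm]
  have himg : (Finset.Icc s r).filter (fun i => m ∣ i) =
      (Finset.Icc ((s - 1) / m + 1) (r / m)).image (fun j => m * j) := by
    ext i
    simp only [Finset.mem_filter, Finset.mem_Icc, Finset.mem_image]
    constructor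
    · rintro ⟨⟨h1, h2⟩, j, rfl⟩
      exact ⟨j, ⟨(hlow j).2 h1, (hhigh j).2 h2⟩, rfl⟩
    · rintro ⟨j, ⟨hj1, hj2⟩, rfl⟩
      exact ⟨⟨(hlow j).1 hj1, (hhigh j).1 hj2⟩, ⟨j, rfl⟩⟩
  rw [himg, Finset.sum_image (fun a _ b _ h => Nat.eq_of_mul_eq_mul_left hm0 h)]
  apply Finset.sum_congr rfl
  intro j _
  rw [Nat.mul_div_cancel_left _ hm0]
end
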